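/- Let X be a diffeological space and let A and C be subsets of X with C ⊆ A. Suppose there exists a D-open set V of X containing A and a smooth retraction γ : V → A (γ restricted to A is the identity), where A and V carry the sub-diffeology. Then C is D-compact in A if and only if C is D-compact in X. -/

import Mathlib

open Set Function ContDiff
open scoped Classical

noncomputable section

/-- Euclidean space `ℝⁿ`. -/
abbrev Euc (n : ℕ) : Type := EuclideanSpace ℝ (Fin n)

/-- A diffeology on a set `X`: a family of parametrizations (maps from open subsets of
Euclidean spaces into `X`), called plots, satisfying the covering, locality and smooth
compatibility axioms. -/
structure Diffeology' (X : Type*) where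
  /-- `IsPlot U P` means that the parametrization `P : U → X` is a plot. -/
  IsPlot : ∀ {n : ℕ} (U : Set (Euc n)), (U → X) → Prop
  /-- Plots are defined on open subsets of Euclidean spaces. -/
  isOpen_dom : ∀ {n : ℕ} {U : Set (Euc n)} {P : U → X}, IsPlot U P → IsOpen U
  /-- Every constant parametrization is a plot. -/
  const_plot : ∀ {n : ℕ} {U : Set (Euc n)}, IsOpen U → ∀ x : X, IsPlot U fun _ => x
  /-- A parametrization is a plot as soon as it is locally a plot. -/
  locality : ∀ {n : ℕ} {U : Set (Euc n)} {P : U → X}, IsOpen U →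
    (∀ u : U, ∃ (W : Set (Euc n)) (hWU : W ⊆ U), IsOpen W ∧ (u : Euc n) ∈ W ∧
      IsPlot W fun w => P ⟨w.1, hWU w.2⟩) → IsPlot U P
  /-- The composite of a plot with a smooth map between open subsets of Euclidean
  spaces is a plot. -/
  smooth_comp : ∀ {n m : ℕ} {U : Set (Euc n)} {P : U → X} {V : Set (Euc m)}
    {F : Euc m → Euc n}, IsPlot U P → IsOpen V → ContDiffOn ℝ ∞ F V →
    ∀ hFV : MapsTo F V U, IsPlot V fun v => P ⟨F v.1, hFV v.2⟩

namespace Diffeology'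

variable {X Y : Type*} (D : Diffeology' X)

/-- A subset `A` of a diffeological space is `D`-open if its preimage under every
plot is open. -/
def IsDOpen (A : Set X) : Prop :=
  ∀ {n : ℕ} {U : Set (Euc n)} {P : U → X}, D.IsPlot U P → IsOpen (P ⁻¹' A)

/-- A subset `A` of a diffeological space is `D`-closed if its preimage under every
plot is closed. -/
def IsDClosed (A : Set X) : Prop :=
  ∀ {n : ℕ} {U : Set (Euc n)} {P : U → X}, D.IsPlot U P → IsClosed (P ⁻¹' A)

/-- The `D`-closure of a set: the smallest `D`-closed set containing it. -/
def dClosure (A : Set X) : Set X := ⋂₀ {C : Set X | D.IsDClosed C ∧ A ⊆ C}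

/-- The sub-diffeology on a subset `A ⊆ X`: plots are the parametrizations into `A`
that are plots of `X`. -/
def sub (A : Set X) : Diffeology' A where
  IsPlot U P := D.IsPlot U fun u => (P u : X)
  isOpen_dom h := D.isOpen_dom h
  const_plot hU a := D.const_plot hU (a : X)
  locality hU h := D.locality hU fun u => by
    obtain ⟨W, hWU, hW, huW, hP⟩ := h u
    exact ⟨W, hWU, hW, huW, hP⟩
  smooth_comp h hV hF hFV := D.smooth_comp h hV hF hFV

/-- A diffeological space is `D`-Hausdorff if any two distinct points admit disjoint
`D`-open neighbourhoods. -/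
def IsDHausdorff : Prop :=
  ∀ x y : X, x ≠ y → ∃ Ux Uy : Set X,
    D.IsDOpen Ux ∧ D.IsDOpen Uy ∧ x ∈ Ux ∧ y ∈ Uy ∧ Ux ∩ Uy = ∅

/-- A subset `C` of a diffeological space `X` is `D`-compact in `X` if every cover of
`C` by `D`-open sets of `X` has a finite subcover. -/
def IsDCompactIn (C : Set X) : Prop :=
  ∀ S : Set (Set X), (∀ s ∈ S, D.IsDOpen s) → C ⊆ ⋃₀ S →
    ∃ T ⊆ S, T.Finite ∧ C ⊆ ⋃₀ T

/-- A collection of subsets of a diffeological space is locally finite if every point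
has a `D`-open neighbourhood meeting only finitely many members of the collection. -/
def LocallyFiniteFam {ι : Type*} (W : ι → Set X) : Prop :=
  ∀ x : X, ∃ V : Set X, D.IsDOpen V ∧ x ∈ V ∧ {i : ι | (W i ∩ V).Nonempty}.Finite

/-- A set of subsets of a diffeological space is locally finite if every point has a
`D`-open neighbourhood meeting only finitely many members. -/
def LocallyFiniteSet (S : Set (Set X)) : Prop :=
  ∀ x : X, ∃ V : Set X, D.IsDOpen V ∧ x ∈ V ∧ {s ∈ S | (s ∩ V).Nonempty}.Finite

/-- A subset `A` is `D`-paracompact in `X` if every cover of `A` by `D`-open sets of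
`X` has a locally finite refinement by `D`-open sets of `X` (covering `A`). -/
def IsDParacompactIn (A : Set X) : Prop :=
  ∀ S : Set (Set X), (∀ s ∈ S, D.IsDOpen s) → A ⊆ ⋃₀ S →
    ∃ R : Set (Set X), (∀ r ∈ R, D.IsDOpen r) ∧ (∀ r ∈ R, ∃ s ∈ S, r ⊆ s) ∧
      A ⊆ ⋃₀ R ∧ D.LocallyFiniteSet R

/-- A diffeological space is `D`-paracompact if it is `D`-paracompact in itself. -/
def IsDParacompact : Prop := D.IsDParacompactIn univ

/-- A diffeological space is `D`-compact if it is `D`-compact in itself. -/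
def IsDCompact : Prop := D.IsDCompactIn univ

/-- A diffeological space is `D`-normal if disjoint `D`-closed sets can be separated
by disjoint `D`-open sets. -/
def IsDNormal : Prop :=
  ∀ A B : Set X, D.IsDClosed A → D.IsDClosed B → A ∩ B = ∅ →
    ∃ UA UB : Set X, D.IsDOpen UA ∧ D.IsDOpen UB ∧ A ⊆ UA ∧ B ⊆ UB ∧ UA ∩ UB = ∅

end Diffeology'

/-- A map between diffeological spaces is smooth if it sends plots to plots. -/
def DSmooth {X Y : Type*} (DX : Diffeology' X) (DY : Diffeology' Y) (f : X → Y) : Prop :=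
  ∀ {n : ℕ} {U : Set (Euc n)} {P : U → X}, DX.IsPlot U P → DY.IsPlot U (f ∘ P)

/-- Let `C ⊆ A` be subsets of a diffeological space `X`. If there is a `D`-open set
`V ⊇ A` together with a smooth retraction `γ : V → A` (with respect to the
sub-diffeologies), then `C` is `D`-compact in `A` if and only if `C` is `D`-compact
in `X`. -/
theorem isDCompactIn_sub_iff_of_retract {X : Type*} (D : Diffeology' X)
    (A C : Set X) (hCA : C ⊆ A) (V : Set X) (hV : D.IsDOpen V) (hAV : A ⊆ V)
    (γ : V → A) (hγ : DSmooth (D.sub V) (D.sub A) γ)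
    (hret : ∀ a : A, γ ⟨(a : X), hAV a.2⟩ = a) :
    (D.sub A).IsDCompactIn (Subtype.val ⁻¹' C) ↔ D.IsDCompactIn C := by
  constructor
  · -- sub-A-compact → X-compact
    intro hC S hS hcov
    have hS'open : ∀ s ∈ S, (D.sub A).IsDOpen ((Subtype.val : A → X) ⁻¹' s) := by
      intro s hsS n U Q hQ
      exact hS s hsS hQ
    obtain ⟨T', hT'sub, hT'fin, hT'cov⟩ :=
      hC ((fun s => (Subtype.val : A → X) ⁻¹' s) '' S)
        (by rintro t ⟨s, hsS, rfl⟩; exact hS'open s hsS)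
        (by
          rintro a ha
          obtain ⟨s, hsS, hxs⟩ := hcov ha
          exact ⟨Subtype.val ⁻¹' s, ⟨s, hsS, rfl⟩, hxs⟩)
    choose g hgS hgeq using fun t : T' => hT'sub t.2
    haveI := hT'fin.to_subtype
    refine ⟨Set.range g, ?_, Set.finite_range g, ?_⟩
    · rintro s ⟨t, rfl⟩; exact hgS t
    · intro x hx
      have hxA : x ∈ A := hCA hx
      obtain ⟨t, htT', hat⟩ := hT'cov (show (⟨x, hxA⟩ : A) ∈ Subtype.val ⁻¹' C from hx)
      refine ⟨g ⟨t, htT'⟩, ⟨⟨t, htT'⟩, rfl⟩, ?_⟩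
      have h2 : (Subtype.val ⁻¹' g ⟨t, htT'⟩ : Set A) = t := hgeq ⟨t, htT'⟩
      rw [← h2] at hat
      exact hat
  · -- X-compact → sub-A-compact
    intro hC S hS hcov
    set W : Set A → Set X := fun s => {x | ∃ h : x ∈ V, γ ⟨x, h⟩ ∈ s} with hWdef
    have hWopen : ∀ s ∈ S, D.IsDOpen (W s) := by
      intro s hsS n U P hP
      have hUopen := D.isOpen_dom hP
      have hPV : IsOpen (P ⁻¹' V) := hV hP
      set V' : Set (Euc n) := Subtype.val '' (P ⁻¹' V) with hV'def
      have hV'U : V' ⊆ U := by rintro v ⟨u, _, rfl⟩; exact u.2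
      have hV'open : IsOpen V' := hUopen.isOpenMap_subtype_val _ hPV
      have hmaps : MapsTo (id : Euc n → Euc n) V' U := fun v hv => hV'U hv
      have hplot : D.IsPlot V' (fun v => P ⟨id v.1, hmaps v.2⟩) :=
        D.smooth_comp hP hV'open contDiffOn_id hmaps
      have hmemV : ∀ v : V', P ⟨v.1, hV'U v.2⟩ ∈ V := by
        rintro ⟨v, u, hu, rfl⟩
        have : (⟨(u : Euc n), hV'U ⟨u, hu, rfl⟩⟩ : U) = u := Subtype.ext rfl
        rw [this]; exact hu
      set Q : V' → V := fun v => ⟨P ⟨v.1, hV'U v.2⟩, hmemV v⟩ with hQdef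
      have hQplot : (D.sub V).IsPlot V' Q := hplot
      have hγQ : (D.sub A).IsPlot V' (γ ∘ Q) := hγ hQplot
      have hopen : IsOpen ((γ ∘ Q) ⁻¹' s) := hS s hsS hγQ
      have hopen2 : IsOpen (Subtype.val '' ((γ ∘ Q) ⁻¹' s)) :=
        hV'open.isOpenMap_subtype_val _ hopen
      have heq : P ⁻¹' (W s) = (Subtype.val : U → Euc n) ⁻¹' (Subtype.val '' ((γ ∘ Q) ⁻¹' s)) := by
        ext u
        constructor
        · rintro ⟨h, hγs⟩
          refine ⟨⟨u.1, ⟨u, h, rfl⟩⟩, ?_, rfl⟩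
          show γ (Q ⟨u.1, ⟨u, h, rfl⟩⟩) ∈ s
          have hu : (⟨u.1, hV'U ⟨u, h, rfl⟩⟩ : U) = u := Subtype.ext rfl
          have hQu : Q ⟨u.1, ⟨u, h, rfl⟩⟩ = ⟨P u, h⟩ := Subtype.ext (congrArg P hu)
          rw [hQu]
          exact hγs
        · rintro ⟨v, hvs, hvu⟩
          have hPu : P ⟨v.1, hV'U v.2⟩ ∈ V := hmemV v
          have hu : (⟨v.1, hV'U v.2⟩ : U) = u := Subtype.ext hvu
          rw [hu] at hPu
          refine ⟨hPu, ?_⟩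
          have : γ (Q v) ∈ s := hvs
          simp only [hQdef] at this
          have h2 : (⟨P ⟨v.1, hV'U v.2⟩, hmemV v⟩ : V) = ⟨P u, hPu⟩ := by
            apply Subtype.ext; simp only [hu]
          rw [h2] at this
          exact this
      rw [heq]
      exact hopen2.preimage continuous_subtype_val
    obtain ⟨T, hTsub, hTfin, hTcov⟩ := hC (W '' S)
      (by rintro t ⟨s, hsS, rfl⟩; exact hWopen s hsS)
      (by
        intro x hx
        have hxA : x ∈ A := hCA hx
        obtain ⟨s, hsS, hxs⟩ := hcov (show (⟨x, hxA⟩ : A) ∈ Subtype.val ⁻¹' C from hx)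
        refine ⟨W s, ⟨s, hsS, rfl⟩, hAV hxA, ?_⟩
        rw [hret ⟨x, hxA⟩]
        exact hxs)
    choose g hgS hgeq using fun t : T => hTsub t.2
    haveI := hTfin.to_subtype
    refine ⟨Set.range g, ?_, Set.finite_range g, ?_⟩
    · rintro s ⟨t, rfl⟩; exact hgS t
    · intro a ha
      obtain ⟨t, htT, hat⟩ := hTcov ha
      refine ⟨g ⟨t, htT⟩, ⟨⟨t, htT⟩, rfl⟩, ?_⟩
      have hteq : W (g ⟨t, htT⟩) = t := hgeq ⟨t, htT⟩
      rw [← hteq] at hat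
      obtain ⟨h, hγs⟩ := hat
      have : γ ⟨(a : X), h⟩ = a := by
        have := hret a
        convert this using 2
      rwa [this] at hγs

end
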